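/- In the graph SPECIAL(n, a) (with n ≥ 4, a ≥ 1), the greedy minimum-degree heuristic for independent set — repeatedly select a vertex of minimum degree, add it to the set, and delete it together with its neighbors — outputs an independent set of size exactly 3 ({u, v} and one vertex of the clique C), while the maximum independent set has size n. Hence the greedy approximation ratio on this family is 3/n, which tends to 0 as n → ∞. -/

import Mathlib

open Classical

/-- A set of vertices is independent: pairwise nonadjacent. -/
def IsIndepSet {W : Type*} (G : SimpleGraph W) (s : Set W) : Prop :=
  s.Pairwise fun a b => ¬ G.Adj a b

/-- The size of a maximum independent set of `G`. -/
noncomputable def misSize {W : Type*} (G : SimpleGraph W) : ℕ :=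
  sSup {n | ∃ s : Finset W, IsIndepSet G ↑s ∧ s.card = n}

/-- Vertices of `SPECIAL(n, a)`: `Sum.inl 0 = u`, `Sum.inl 1 = v`,
`Sum.inr (Sum.inl i)` are the vertices of the independent set `I` (size `n`),
and `Sum.inr (Sum.inr j)` are the vertices of the clique `C` (size `n + a`). -/
abbrev SpecialV (n a : ℕ) := Fin 2 ⊕ (Fin n ⊕ Fin (n + a))

/-- The graph `SPECIAL(n, a)`: `u` and `v` are adjacent to all of `I`, every
vertex of `I` is adjacent to every vertex of `C`, `C` is a clique, and there
are no other edges. -/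
def special (n a : ℕ) : SimpleGraph (SpecialV n a) :=
  SimpleGraph.fromRel fun x y =>
    match x, y with
    | Sum.inl _, Sum.inr (Sum.inl _) => True
    | Sum.inr (Sum.inl _), Sum.inr (Sum.inr _) => True
    | Sum.inr (Sum.inr _), Sum.inr (Sum.inr _) => True
    | _, _ => False

/-- One step of the greedy minimum-degree heuristic.  The state is a pair
`(A, S)`: `A` is the set of remaining vertices and `S` the independent set built
so far.  A vertex `w ∈ A` of minimum degree in the induced subgraph on `A` is
selected, added to `S`, and deleted from `A` together with all its neighbors. -/
noncomputable def GreedyStep {W : Type*} [DecidableEq W] (H : SimpleGraph W)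
    (p q : Finset W × Finset W) : Prop :=
  ∃ w ∈ p.1,
    (∀ x ∈ p.1, (p.1.filter fun y => H.Adj w y).card ≤ (p.1.filter fun y => H.Adj x y).card) ∧
    q.1 = p.1 \ insert w (p.1.filter fun y => H.Adj w y) ∧
    q.2 = insert w p.2

namespace SpecialAux

variable {n a : ℕ}

def Iset (n a : ℕ) : Finset (SpecialV n a) :=
  Finset.univ.map ⟨fun i => Sum.inr (Sum.inl i), fun x y h => by simpa using h⟩

def Cset (n a : ℕ) : Finset (SpecialV n a) :=
  Finset.univ.map ⟨fun j => Sum.inr (Sum.inr j), fun x y h => by simpa using h⟩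

@[simp] lemma mem_Iset (x : SpecialV n a) : x ∈ Iset n a ↔ ∃ i, x = Sum.inr (Sum.inl i) := by
  simp [Iset, eq_comm]
  exact Iff.rfl

@[simp] lemma mem_Cset (x : SpecialV n a) : x ∈ Cset n a ↔ ∃ j, x = Sum.inr (Sum.inr j) := by
  simp [Cset, eq_comm]
  exact Iff.rfl

@[simp] lemma card_Iset : (Iset n a).card = n := by simp [Iset]
@[simp] lemma card_Cset : (Cset n a).card = n + a := by simp [Cset]

lemma fin2_ne_iff : ∀ s t : Fin 2, s ≠ t ↔ s = 1 - t := by decide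

lemma filter_univ_inl (t : Fin 2) :
    Finset.univ.filter (fun y => (special n a).Adj (Sum.inl t) y) = Iset n a := by
  ext x
  rcases x with s | i | j <;> simp [special]

lemma misSize_special (hn : 4 ≤ n) (ha : 1 ≤ a) : misSize (special n a) = n := by
  have hub : ∀ s : Finset (SpecialV n a), IsIndepSet (special n a) ↑s → s.card ≤ n := by
    intro s hs
    by_cases hI : ∃ i : Fin n, Sum.inr (Sum.inl i) ∈ s
    · obtain ⟨i, hi⟩ := hI
      have hsub : s ⊆ Iset n a := by
        intro x hx
        rcases x with t | i' | j
        · exact absurd (hs (by exact_mod_cast hx) (by exact_mod_cast hi) (by simp))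
            (by simp [special])
        · simp
        · exact absurd (hs (by exact_mod_cast hx) (by exact_mod_cast hi) (by simp))
            (by simp [special])
      simpa using Finset.card_le_card hsub
    · push_neg at hI
      by_cases hC : ∃ j : Fin (n + a), Sum.inr (Sum.inr j) ∈ s
      · obtain ⟨j0, hj0⟩ := hC
        have hsub : s ⊆ {Sum.inl 0, Sum.inl 1, Sum.inr (Sum.inr j0)} := by
          intro x hx
          rcases x with t | i | j
          · rcases (by omega : t = 0 ∨ t = 1) with rfl | rfl <;> simp
          · exact absurd hx (hI i)
          · rcases eq_or_ne j j0 with rfl | hne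
            · simp
            · exact absurd (hs (by exact_mod_cast hx) (by exact_mod_cast hj0) (by simp [hne]))
                (by simp [special, hne])
        calc s.card ≤ _ := Finset.card_le_card hsub
          _ ≤ 3 := by
            apply le_trans (Finset.card_insert_le _ _)
            apply Nat.succ_le_succ
            apply le_trans (Finset.card_insert_le _ _)
            simp
          _ ≤ n := by omega
      · push_neg at hC
        have hsub : s ⊆ {Sum.inl 0, Sum.inl 1} := by
          intro x hx
          rcases x with t | i | j
          · rcases (by omega : t = 0 ∨ t = 1) with rfl | rfl <;> simp
          · exact absurd hx (hI i)
          · exact absurd hx (hC j)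
        calc s.card ≤ _ := Finset.card_le_card hsub
          _ ≤ 2 := Finset.card_le_two
          _ ≤ n := by omega
  have hset : {m | ∃ s : Finset (SpecialV n a), IsIndepSet (special n a) ↑s ∧ s.card = m}
      = Set.Iic n := by
    ext m
    constructor
    · rintro ⟨s, hs, rfl⟩
      exact hub s hs
    · intro hm
      obtain ⟨t, hts, htc⟩ := Finset.exists_subset_card_eq (s := Iset n a) (n := m) (by simpa using hm)
      refine ⟨t, ?_, htc⟩
      intro x hx y hy hxy
      obtain ⟨i, rfl⟩ := (mem_Iset _).mp (hts hx)
      obtain ⟨i', rfl⟩ := (mem_Iset _).mp (hts hy)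
      simp [special]
  rw [misSize, hset, csSup_Iic]

end SpecialAux

open SpecialAux

/-- on `SPECIAL(n, a)` with `n ≥ 4` and `a ≥ 1`, any complete run of
the greedy minimum-degree heuristic (started from the full vertex set and the
empty independent set, finishing with no remaining vertices) outputs exactly the
set `{u, v, c}` for some clique vertex `c`, of size 3, while the maximum
independent set has size `n` — so the greedy approximation ratio is `3 / n`. -/
theorem stmt16 (n a : ℕ) (hn : 4 ≤ n) (ha : 1 ≤ a) (S : Finset (SpecialV n a))
    (hrun : Relation.ReflTransGen (GreedyStep (special n a))
      (Finset.univ, (∅ : Finset (SpecialV n a))) ((∅ : Finset (SpecialV n a)), S)) :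
    S.card = 3 ∧
    (∃ c : Fin (n + a),
      S = {Sum.inl 0, Sum.inl 1, Sum.inr (Sum.inr c)}) ∧
    misSize (special n a) = n ∧
    (S.card : ℚ) / n = 3 / n := by
  -- Step 1
  rcases hrun.cases_head with heq | ⟨p1, hs1, hrun1⟩
  · exfalso
    have : (Finset.univ : Finset (SpecialV n a)) = ∅ := congrArg Prod.fst heq
    exact (Finset.univ_nonempty).ne_empty this
  obtain ⟨w, -, hwmin, hq1, hq2⟩ := hs1
  have hwdeg := hwmin (Sum.inl 0) (Finset.mem_univ _)
  rw [filter_univ_inl] at hwdeg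
  simp only [card_Iset] at hwdeg
  obtain ⟨t, rfl⟩ : ∃ t : Fin 2, w = Sum.inl t := by
    rcases w with t | i | j
    · exact ⟨t, rfl⟩
    · exfalso
      have hsub : Cset n a ⊆ Finset.univ.filter
          (fun y => (special n a).Adj (Sum.inr (Sum.inl i)) y) := by
        intro x hx
        obtain ⟨j, rfl⟩ := (mem_Cset _).mp hx
        simp [special]
      have := Finset.card_le_card hsub
      simp only [card_Cset] at this
      omega
    · exfalso
      have hnt : Nontrivial (Fin (n + a)) := Fin.nontrivial_iff_two_le.mpr (by omega)
      obtain ⟨j', hj'⟩ := exists_ne j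
      have hsub : insert (Sum.inr (Sum.inr j')) (Iset n a) ⊆ Finset.univ.filter
          (fun y => (special n a).Adj (Sum.inr (Sum.inr j)) y) := by
        intro x hx
        rcases Finset.mem_insert.mp hx with rfl | hx
        · simp [special, hj'.symm, (Ne.symm hj')]
        · obtain ⟨i, rfl⟩ := (mem_Iset _).mp hx
          simp [special]
      have := Finset.card_le_card hsub
      rw [Finset.card_insert_of_notMem (by simp)] at this
      simp only [card_Iset] at this
      omega
  rw [filter_univ_inl] at hq1
  set t' : Fin 2 := 1 - t with ht'
  have htne : t' ≠ t := (fin2_ne_iff t' t).mpr rfl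
  have hA1 : p1.1 = insert (Sum.inl t') (Cset n a) := by
    rw [hq1]
    ext x
    rcases x with s | i | j
    · simp only [Finset.mem_sdiff, Finset.mem_univ, Finset.mem_insert, mem_Iset, mem_Cset,
        true_and]
      constructor
      · rintro h
        have hs : s ≠ t := by
          intro h'; exact h (Or.inl (by rw [h']))
        left
        rw [(fin2_ne_iff s t).mp hs]
      · rintro (h | ⟨j, h⟩)
        · rintro (h' | ⟨i, h'⟩)
          · exact htne (by simp only [Sum.inl.injEq] at h h'; rw [← h, h'])
          · exact absurd h' (by simp)
        · exact absurd h (by simp)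
    · simp
    · simp [htne]
  have hS1 : p1.2 = {Sum.inl t} := by rw [hq2]; rfl
  -- Step 2
  rcases hrun1.cases_head with heq | ⟨p2, hs2, hrun2⟩
  · exfalso
    have : p1.1 = ∅ := congrArg Prod.fst heq
    rw [hA1] at this
    simp at this
  obtain ⟨w2, hw2mem, hw2min, hq1', hq2'⟩ := hs2
  have hfilt_t' : p1.1.filter (fun y => (special n a).Adj (Sum.inl t') y) = ∅ := by
    rw [hA1]
    ext x
    rcases x with s | i | j <;> simp [special, htne]
  have hw2deg := hw2min (Sum.inl t') (by rw [hA1]; exact Finset.mem_insert_self _ _)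
  rw [hfilt_t'] at hw2deg
  simp only [Finset.card_empty, Nat.le_zero, Finset.card_eq_zero] at hw2deg
  obtain rfl : w2 = Sum.inl t' := by
    rw [hA1] at hw2mem
    rcases Finset.mem_insert.mp hw2mem with rfl | hmem
    · rfl
    · exfalso
      obtain ⟨j, rfl⟩ := (mem_Cset _).mp hmem
      have hnt : Nontrivial (Fin (n + a)) := Fin.nontrivial_iff_two_le.mpr (by omega)
      obtain ⟨j', hj'⟩ := exists_ne j
      have : Sum.inr (Sum.inr j') ∈ p1.1.filter
          (fun y => (special n a).Adj (Sum.inr (Sum.inr j)) y) := by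
        rw [hA1]
        simp [special, hj'.symm, Ne.symm hj']
      rw [hw2deg] at this
      simp at this
  have hA2 : p2.1 = Cset n a := by
    rw [hq1', hfilt_t', hA1]
    ext x
    rcases x with s | i | j <;> simp [htne]
  have hS2 : p2.2 = {Sum.inl t', Sum.inl t} := by rw [hq2', hS1]
  -- Step 3
  rcases hrun2.cases_head with heq | ⟨p3, hs3, hrun3⟩
  · exfalso
    have : p2.1 = ∅ := congrArg Prod.fst heq
    rw [hA2] at this
    have : (Sum.inr (Sum.inr ⟨0, by omega⟩) : SpecialV n a) ∈ (∅ : Finset (SpecialV n a)) := by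
      rw [← this]; simp
    simp at this
  obtain ⟨w3, hw3mem, -, hq1'', hq2''⟩ := hs3
  rw [hA2] at hw3mem
  obtain ⟨c, rfl⟩ := (mem_Cset _).mp hw3mem
  have hfilt3 : p2.1.filter (fun y => (special n a).Adj (Sum.inr (Sum.inr c)) y)
      = (Cset n a).erase (Sum.inr (Sum.inr c)) := by
    rw [hA2]
    ext x
    rcases x with s | i | j
    · simp [special]
    · simp [special]
    · constructor
      · intro h
        have hadj := (Finset.mem_filter.mp h).2
        have hne : (Sum.inr (Sum.inr j) : SpecialV n a) ≠ Sum.inr (Sum.inr c) := hadj.ne'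
        exact Finset.mem_erase.mpr ⟨hne, by simp⟩
      · intro h
        obtain ⟨hne, -⟩ := Finset.mem_erase.mp h
        refine Finset.mem_filter.mpr ⟨by simp, ?_⟩
        have : j ≠ c := fun h => hne (by rw [h])
        simp [special, this, Ne.symm this]
  have hA3 : p3.1 = ∅ := by
    rw [hq1'', hfilt3, Finset.insert_erase hw3mem, hA2, Finset.sdiff_self]
  have hS3 : p3.2 = insert (Sum.inr (Sum.inr c)) {Sum.inl t', Sum.inl t} := by
    rw [hq2'', hS2]
  -- Termination
  have hSfinal : S = insert (Sum.inr (Sum.inr c)) {Sum.inl t', Sum.inl t} := by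
    rcases hrun3.cases_head with heq | ⟨p4, hs4, -⟩
    · rw [← hS3, heq]
    · exfalso
      obtain ⟨w4, hw4, -⟩ := hs4
      rw [hA3] at hw4
      simp at hw4
  have hSfinal' : S = {Sum.inl 0, Sum.inl 1, Sum.inr (Sum.inr c)} := by
    rw [hSfinal]
    have hpair : ({Sum.inl t', Sum.inl t} : Finset (SpecialV n a)) = {Sum.inl 0, Sum.inl 1} := by
      rcases (by omega : t = 0 ∨ t = 1) with rfl | rfl
      · have : t' = 1 := by rw [ht']; rfl
        rw [this, Finset.pair_comm]
      · have : t' = 0 := by rw [ht']; rfl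
        rw [this]
    rw [hpair]
    ext x
    simp
    tauto
  have hcard : S.card = 3 := by
    rw [hSfinal']
    rw [Finset.card_insert_of_notMem (by simp), Finset.card_insert_of_notMem (by simp),
      Finset.card_singleton]
  refine ⟨hcard, ⟨c, hSfinal'⟩, misSize_special hn ha, by rw [hcard]; norm_num⟩
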